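/- With the Bedford-McMullen setup, for $0 \le z \le \log R$ define $\psi(z) = \max\{h(\underline{p}) : \underline{p} \in \Upsilon, \; h_r(\underline{p}) = z\}$ where $R = |S|$. Then $\psi(z) = z + \max\{\sum_{a \in S} p_a \log T_a : (p_a)_{a\in S} \text{ a probability vector on } S, \; -\sum_a p_a \log p_a = z\}$. -/

import Mathlib

open Real Finset


lemma sum_sigma_eq' {S : Type*} [Fintype S] (P : S → Type*) [∀ a, Fintype (P a)]
    (f : (Σ a : S, P a) → ℝ) :
    ∑ q : (Σ a : S, P a), f q = ∑ a : S, ∑ b : P a, f ⟨a, b⟩ := by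
  rw [← Finset.univ_sigma_univ, Finset.sum_sigma]

lemma row_jensen {ι : Type*} [Fintype ι] [Nonempty ι] (w : ι → ℝ) (hw : ∀ i, 0 ≤ w i) :
    ∑ i : ι, Real.negMulLog (w i) ≤
      Real.negMulLog (∑ i : ι, w i) + (∑ i : ι, w i) * Real.log (Fintype.card ι) := by
  set T : ℝ := (Fintype.card ι : ℝ) with hTdef
  have hT0 : (0 : ℝ) < T := by
    rw [hTdef]; exact_mod_cast Fintype.card_pos (α := ι)
  have hsum1 : ∑ _i : ι, (T⁻¹ : ℝ) = 1 := by
    rw [Finset.sum_const, nsmul_eq_mul, Finset.card_univ, ← hTdef,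
      mul_inv_cancel₀ hT0.ne']
  have hJ := Real.concaveOn_negMulLog.le_map_sum (t := Finset.univ)
      (w := fun _ : ι => T⁻¹) (p := fun i => T * w i)
      (fun i _ => by positivity) hsum1
      (fun i _ => Set.mem_Ici.mpr (mul_nonneg hT0.le (hw i)))
  simp only [smul_eq_mul] at hJ
  have hL : ∀ i : ι, T⁻¹ * Real.negMulLog (T * w i)
      = T⁻¹ * w i * Real.negMulLog T + Real.negMulLog (w i) := by
    intro i
    rw [Real.negMulLog_mul]
    field_simp
  have hR : ∀ i : ι, T⁻¹ * (T * w i) = w i := by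
    intro i; field_simp
  rw [Finset.sum_congr rfl (fun i _ => hL i), Finset.sum_congr rfl (fun i _ => hR i),
    Finset.sum_add_distrib] at hJ
  have hfirst : ∑ i : ι, T⁻¹ * w i * Real.negMulLog T
      = -(∑ i : ι, w i) * Real.log T := by
    rw [← Finset.sum_mul]
    rw [show ∑ i : ι, T⁻¹ * w i = T⁻¹ * ∑ i : ι, w i by rw [Finset.mul_sum]]
    rw [Real.negMulLog]
    field_simp
  rw [hfirst] at hJ
  linarith

lemma exists_entropy_eq {S : Type*} [Fintype S] [Nonempty S] {z : ℝ} (hz0 : 0 ≤ z)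
    (hz1 : z ≤ Real.log (Fintype.card S)) :
    ∃ p : S → ℝ, (∀ a, 0 ≤ p a) ∧ (∑ a : S, p a) = 1 ∧
      ∑ a : S, Real.negMulLog (p a) = z := by
  classical
  have a₀ : S := Classical.arbitrary S
  set R : ℝ := (Fintype.card S : ℝ) with hRdef
  have hR0 : (0 : ℝ) < R := by
    rw [hRdef]; exact_mod_cast Fintype.card_pos (α := S)
  set f : ℝ → S → ℝ := fun t a => (1 - t) * (if a = a₀ then 1 else 0) + t / R with hfdef
  set E : ℝ → ℝ := fun t => ∑ a : S, Real.negMulLog (f t a) with hEdef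
  have hEcont : Continuous E := by
    apply continuous_finset_sum
    intro a _
    exact Real.continuous_negMulLog.comp (by fun_prop)
  have hE0 : E 0 = 0 := by
    simp only [hEdef, hfdef]
    have h : ∀ a : S, Real.negMulLog ((1 - 0) * (if a = a₀ then (1:ℝ) else 0) + 0 / R) = 0 := by
      intro a; by_cases h : a = a₀ <;> simp [h]
    rw [Finset.sum_congr rfl (fun a _ => h a), Finset.sum_const_zero]
  have hE1 : E 1 = Real.log R := by
    simp only [hEdef, hfdef]
    have h : ∀ a : S, Real.negMulLog ((1 - 1) * (if a = a₀ then (1:ℝ) else 0) + 1 / R)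
        = Real.negMulLog (R⁻¹) := by intro a; norm_num
    rw [Finset.sum_congr rfl (fun a _ => h a), Finset.sum_const, nsmul_eq_mul,
      Finset.card_univ, ← hRdef, Real.negMulLog, Real.log_inv]
    field_simp
  have hz : z ∈ Set.Icc (E 0) (E 1) := by rw [hE0, hE1]; exact ⟨hz0, hz1⟩
  obtain ⟨t, ht, hEt⟩ := intermediate_value_Icc zero_le_one hEcont.continuousOn hz
  refine ⟨f t, ?_, ?_, hEt⟩
  · intro a
    have h1 : 0 ≤ 1 - t := by linarith [ht.2]
    have h2 : 0 ≤ t / R := div_nonneg ht.1 hR0.le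
    have h3 : (0:ℝ) ≤ (if a = a₀ then (1:ℝ) else 0) := by positivity
    positivity
  · simp only [hfdef]
    rw [Finset.sum_add_distrib, ← Finset.mul_sum]
    simp only [Finset.sum_ite_eq', Finset.mem_univ, if_true]
    rw [Finset.sum_const, nsmul_eq_mul, Finset.card_univ, ← hRdef]
    field_simp
    ring

-- -∑ p log p = ∑ negMulLog p
lemma neg_sum_eq_negMulLog {ι : Type*} [Fintype ι] (p : ι → ℝ) :
    -∑ i : ι, p i * Real.log (p i) = ∑ i : ι, Real.negMulLog (p i) := by
  rw [← Finset.sum_neg_distrib]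
  exact Finset.sum_congr rfl fun i _ => by rw [Real.negMulLog_eq_neg]

/-- For `0 ≤ z ≤ log R`, the maximal entropy among probability vectors on `Q = Σ a, P a` with
row entropy `z` equals `z` plus the maximal value of `∑ a, p_a log T_a` among row probability
vectors with entropy `z`. -/
theorem stmt5 (S : Type*) [Fintype S] [Nonempty S] (P : S → Type*) [∀ a, Fintype (P a)]
    [∀ a, Nonempty (P a)] (z : ℝ) (hz0 : 0 ≤ z) (hz1 : z ≤ Real.log (Fintype.card S)) :
    sSup {x : ℝ | ∃ p : (Σ a : S, P a) → ℝ, (∀ q, 0 ≤ p q) ∧ (∑ q : (Σ a : S, P a), p q) = 1 ∧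
        (-∑ a : S, (∑ b : P a, p ⟨a, b⟩) * Real.log (∑ b : P a, p ⟨a, b⟩)) = z ∧
        x = -∑ q : (Σ a : S, P a), p q * Real.log (p q)} =
      z + sSup {x : ℝ | ∃ p : S → ℝ, (∀ a, 0 ≤ p a) ∧ (∑ a : S, p a) = 1 ∧
        (-∑ a : S, p a * Real.log (p a)) = z ∧
        x = ∑ a : S, p a * Real.log (Fintype.card (P a) : ℝ)} := by
  classical
  set A := {x : ℝ | ∃ p : (Σ a : S, P a) → ℝ, (∀ q, 0 ≤ p q) ∧ (∑ q : (Σ a : S, P a), p q) = 1 ∧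
        (-∑ a : S, (∑ b : P a, p ⟨a, b⟩) * Real.log (∑ b : P a, p ⟨a, b⟩)) = z ∧
        x = -∑ q : (Σ a : S, P a), p q * Real.log (p q)} with hAdef
  set B := {x : ℝ | ∃ p : S → ℝ, (∀ a, 0 ≤ p a) ∧ (∑ a : S, p a) = 1 ∧
        (-∑ a : S, p a * Real.log (p a)) = z ∧
        x = ∑ a : S, p a * Real.log (Fintype.card (P a) : ℝ)} with hBdef
  -- the constraint set K and the objective g
  set K : Set (S → ℝ) := {p | (∀ a, 0 ≤ p a) ∧ (∑ a : S, p a) = 1 ∧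
      (-∑ a : S, p a * Real.log (p a)) = z} with hKdef
  set g : (S → ℝ) → ℝ := fun p => ∑ a : S, p a * Real.log (Fintype.card (P a) : ℝ) with hgdef
  have hgcont : Continuous g := by
    apply continuous_finset_sum
    intro a _
    exact (continuous_apply a).mul continuous_const
  have hBimg : B = g '' K := by
    ext x
    constructor
    · rintro ⟨p, h1, h2, h3, rfl⟩
      exact ⟨p, ⟨h1, h2, h3⟩, rfl⟩
    · rintro ⟨p, ⟨h1, h2, h3⟩, rfl⟩
      exact ⟨p, h1, h2, h3, rfl⟩
  have hKcomp : IsCompact K := by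
    have h1 : IsCompact (stdSimplex ℝ S) := isCompact_stdSimplex ℝ S
    have h2 : IsClosed {p : S → ℝ | (-∑ a : S, p a * Real.log (p a)) = z} := by
      apply isClosed_eq _ continuous_const
      apply Continuous.neg
      apply continuous_finset_sum
      intro a _
      exact Real.continuous_mul_log.comp (continuous_apply a)
    have hKeq : K = stdSimplex ℝ S ∩ {p : S → ℝ | (-∑ a : S, p a * Real.log (p a)) = z} := by
      ext p
      simp only [hKdef, Set.mem_setOf_eq, Set.mem_inter_iff, stdSimplex, and_assoc]
    rw [hKeq]
    exact h1.inter_right h2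
  have hKne : K.Nonempty := by
    obtain ⟨p, h1, h2, h3⟩ := exists_entropy_eq hz0 hz1
    exact ⟨p, h1, h2, by rw [neg_sum_eq_negMulLog]; exact h3⟩
  have hBcomp : IsCompact B := by rw [hBimg]; exact hKcomp.image hgcont
  have hBne : B.Nonempty := by rw [hBimg]; exact hKne.image g
  have hBbdd : BddAbove B := hBcomp.bddAbove
  have hsupB : sSup B ∈ B := hBcomp.sSup_mem hBne
  rw [hBimg] at hsupB
  obtain ⟨ps, hpsK, hgps⟩ := hsupB
  obtain ⟨hps0, hps1, hpsz⟩ := hpsK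
  -- the maximizing joint measure
  set q : (Σ a : S, P a) → ℝ := fun x => ps x.1 / (Fintype.card (P x.1) : ℝ) with hqdef
  have hT0 : ∀ a : S, (0 : ℝ) < (Fintype.card (P a) : ℝ) := fun a => by
    exact_mod_cast Fintype.card_pos (α := P a)
  have hrow : ∀ a : S, (∑ b : P a, q ⟨a, b⟩) = ps a := by
    intro a
    rw [hqdef]
    simp only
    change ∑ _b : P a, ps a / (Fintype.card (P a) : ℝ) = ps a
    rw [Finset.sum_const, nsmul_eq_mul, Finset.card_univ,
      mul_div_cancel₀ _ (hT0 a).ne']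
  -- key membership: z + sSup B ∈ A
  have hmem : z + sSup B ∈ A := by
    refine ⟨q, fun x => div_nonneg (hps0 x.1) (hT0 x.1).le, ?_, ?_, ?_⟩
    · rw [sum_sigma_eq']
      rw [Finset.sum_congr rfl (fun a _ => hrow a)]
      exact hps1
    · rw [Finset.sum_congr rfl (fun a (_ : a ∈ Finset.univ) => by rw [hrow a])]
      exact hpsz
    · rw [sum_sigma_eq' P (fun x => q x * Real.log (q x))]
      have hterm : ∀ a : S, ∑ b : P a, q ⟨a, b⟩ * Real.log (q ⟨a, b⟩)
          = ps a * Real.log (ps a) - ps a * Real.log (Fintype.card (P a) : ℝ) := by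
        intro a
        have : ∀ b : P a, q ⟨a, b⟩ * Real.log (q ⟨a, b⟩)
            = (ps a / (Fintype.card (P a) : ℝ)) * Real.log (ps a / (Fintype.card (P a) : ℝ)) :=
          fun b => rfl
        rw [Finset.sum_congr rfl (fun b _ => this b), Finset.sum_const, nsmul_eq_mul,
          Finset.card_univ]
        by_cases hpa : ps a = 0
        · simp [hpa]
        · rw [Real.log_div hpa (hT0 a).ne']
          field_simp
      rw [Finset.sum_congr rfl (fun a _ => hterm a)]
      rw [Finset.sum_sub_distrib, neg_sub]
      rw [← hBimg] at hgps
      have h' : ∑ a : S, ps a * Real.log (Fintype.card (P a) : ℝ) = sSup B := hgps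
      linarith [hpsz, h']
  -- upper bound
  have hub : ∀ x ∈ A, x ≤ z + sSup B := by
    rintro x ⟨p, hp0, hp1, hpr, rfl⟩
    set m : S → ℝ := fun a => ∑ b : P a, p ⟨a, b⟩ with hmdef
    have hm0 : ∀ a, 0 ≤ m a := fun a => Finset.sum_nonneg fun b _ => hp0 ⟨a, b⟩
    have hm1 : ∑ a : S, m a = 1 := by rw [← hp1, sum_sigma_eq']
    have hmz : (-∑ a : S, m a * Real.log (m a)) = z := hpr
    have hmB : g m ∈ B := ⟨m, hm0, hm1, hmz, rfl⟩
    have hgm : g m ≤ sSup B := le_csSup hBbdd hmB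
    have hchain : -∑ q : (Σ a : S, P a), p q * Real.log (p q) ≤ z + g m := by
      rw [neg_sum_eq_negMulLog, sum_sigma_eq']
      have hrowle : ∀ a : S, ∑ b : P a, Real.negMulLog (p ⟨a, b⟩)
          ≤ Real.negMulLog (m a) + m a * Real.log (Fintype.card (P a) : ℝ) :=
        fun a => row_jensen (fun b => p ⟨a, b⟩) (fun b => hp0 ⟨a, b⟩)
      calc ∑ a : S, ∑ b : P a, Real.negMulLog (p ⟨a, b⟩)
          ≤ ∑ a : S, (Real.negMulLog (m a) + m a * Real.log (Fintype.card (P a) : ℝ)) :=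
            Finset.sum_le_sum fun a _ => hrowle a
        _ = (∑ a : S, Real.negMulLog (m a)) + g m := by
            rw [Finset.sum_add_distrib]
        _ = z + g m := by rw [← neg_sum_eq_negMulLog, hmz]
    linarith
  have hAne : A.Nonempty := ⟨_, hmem⟩
  have hAbdd : BddAbove A := ⟨z + sSup B, hub⟩
  exact le_antisymm (csSup_le hAne hub) (le_csSup hAbdd hmem)
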